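/- Let j₁, j₃ be real numbers with j₃ > j₁ > 0, and set s = (j₃ + √(j₃² + 8j₁²))/(2j₁). Then s > 2, and with w₊ = (s + √(s² − 4))/2, w₋ = (s − √(s² − 4))/2 and b₃ = (j₁/s)^{1/3}, the system b₁(b₂² + b₃²) = j₁, b₂(b₁² + b₃²) = j₁, b₃(b₁² + b₂²) = j₃ has exactly two real solutions, namely (b₃/w±, w± b₃, b₃) for the two choices of sign. Moreover w₊ w₋ = 1. -/

import Mathlib

private lemma diag_aux_forward (j₁ j₃ s b₃ w : ℝ)
    (hj1 : j₁ = s * b₃ ^ 3) (hj3 : j₃ = b₃ ^ 3 * (s ^ 2 - 2))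
    (hw : w ≠ 0) (hwq : w ^ 2 = s * w - 1) :
    (b₃ / w * ((w * b₃) ^ 2 + b₃ ^ 2) = j₁ ∧
     (w * b₃) * ((b₃ / w) ^ 2 + b₃ ^ 2) = j₁ ∧
     b₃ * ((b₃ / w) ^ 2 + (w * b₃) ^ 2) = j₃) := by
  refine ⟨?_, ?_, ?_⟩
  · field_simp
    linear_combination b₃ ^ 3 * hwq - w * hj1
  · field_simp
    linear_combination b₃ ^ 3 * hwq - w * hj1
  · field_simp
    linear_combination (b₃ ^ 3 * (w ^ 2 + s * w + 1)) * hwq - w ^ 2 * hj3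

private lemma diag_aux_unique (j₁ j₃ s wp wm b₃ : ℝ)
    (h₁ : 0 < j₁) (h₃₁ : j₃ > j₁) (h3pos : 0 < j₃)
    (hspos : 0 < s) (hb3pos : 0 < b₃)
    (hj1 : j₁ = s * b₃ ^ 3) (hj3 : j₃ = b₃ ^ 3 * (s ^ 2 - 2))
    (hwsum : wp + wm = s) (hwprod : wp * wm = 1)
    (hwpne : wp ≠ 0) (hwmne : wm ≠ 0)
    (b₁ b₂ c₃ : ℝ)
    (hb1 : b₁ * (b₂ ^ 2 + c₃ ^ 2) = j₁) (hb2 : b₂ * (b₁ ^ 2 + c₃ ^ 2) = j₁)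
    (hc3 : c₃ * (b₁ ^ 2 + b₂ ^ 2) = j₃) :
    (b₁, b₂, c₃) = (b₃ / wp, wp * b₃, b₃) ∨
    (b₁, b₂, c₃) = (b₃ / wm, wm * b₃, b₃) := by
  have hb3ne : b₃ ≠ 0 := ne_of_gt hb3pos
  have hfac : (b₁ - b₂) * (c₃ ^ 2 - b₁ * b₂) = 0 := by
    linear_combination hb1 - hb2
  rcases mul_eq_zero.1 hfac with h | h
  · -- b₁ = b₂ : impossible since j₃ > j₁
    exfalso
    have hb12 : b₂ = b₁ := by linarith
    rw [hb12] at hb1 hc3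
    have hb1pos : 0 < b₁ := by
      rcases le_or_gt b₁ 0 with hle | hpos
      · exfalso
        nlinarith [mul_nonneg (neg_nonneg.2 hle)
          (add_nonneg (sq_nonneg b₁) (sq_nonneg c₃))]
      · exact hpos
    nlinarith [mul_nonneg hb1pos.le (sq_nonneg (b₁ - c₃))]
  · have hc2 : c₃ ^ 2 = b₁ * b₂ := by linarith
    have hE1 : c₃ ^ 2 * (b₁ + b₂) = j₁ := by
      linear_combination hb1 + b₂ * hc2
    have hc3ne : c₃ ≠ 0 := by
      intro h0; rw [h0] at hE1; simp at hE1; nlinarith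
    have hcsq : 0 < c₃ ^ 2 := by positivity
    have hsum : 0 < b₁ + b₂ := by
      by_contra h'
      push_neg at h'
      nlinarith [mul_nonneg hcsq.le (neg_nonneg.2 h')]
    have hprodpos : 0 < b₁ * b₂ := by rw [← hc2]; exact hcsq
    have hb2pos : 0 < b₂ := by nlinarith
    have hb1pos : 0 < b₁ := by nlinarith
    have hc3pos : 0 < c₃ := by
      rcases lt_or_gt_of_ne hc3ne with hneg | hpos
      · exfalso
        nlinarith [mul_pos hb1pos hb1pos, mul_pos hb2pos hb2pos]
      · exact hpos
    have hE3 : c₃ * ((b₁ + b₂) ^ 2 - 2 * c₃ ^ 2) = j₃ := by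
      linear_combination hc3 - 2 * c₃ * hc2
    have hquad : 2 * (c₃ ^ 3) ^ 2 + j₃ * c₃ ^ 3 - j₁ ^ 2 = 0 := by
      linear_combination (c₃ ^ 2 * (b₁ + b₂) + j₁) * hE1 - c₃ ^ 3 * hE3
    have hquadb : 2 * (b₃ ^ 3) ^ 2 + j₃ * b₃ ^ 3 - j₁ ^ 2 = 0 := by
      linear_combination b₃ ^ 3 * hj3 - (j₁ + s * b₃ ^ 3) * hj1
    have hfac2 : (c₃ ^ 3 - b₃ ^ 3) * (2 * (c₃ ^ 3 + b₃ ^ 3) + j₃) = 0 := by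
      linear_combination hquad - hquadb
    have hcube : c₃ ^ 3 = b₃ ^ 3 := by
      rcases mul_eq_zero.1 hfac2 with h' | h'
      · linarith
      · exfalso; nlinarith [pow_pos hc3pos 3, pow_pos hb3pos 3]
    have hcb : c₃ = b₃ := by
      have hf3 : (c₃ - b₃) * (c₃ ^ 2 + c₃ * b₃ + b₃ ^ 2) = 0 := by
        linear_combination hcube
      rcases mul_eq_zero.1 hf3 with h' | h'
      · linarith
      · exfalso; nlinarith [mul_pos hc3pos hb3pos]
    rw [hcb] at hc2 hE1 ⊢
    have hsum2 : b₁ + b₂ = s * b₃ :=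
      mul_left_cancel₀ (pow_ne_zero 2 hb3ne) (by linear_combination hE1 + hj1)
    have hfw : (b₂ - wp * b₃) * (b₂ - wm * b₃) = 0 := by
      linear_combination hc2 + b₂ * hsum2 - b₃ * b₂ * hwsum + b₃ ^ 2 * hwprod
    rcases mul_eq_zero.1 hfw with h' | h'
    · left
      have hb2v : b₂ = wp * b₃ := by linarith
      have hb1v : b₁ = b₃ / wp := by
        rw [eq_div_iff hwpne]
        refine mul_right_cancel₀ hb3ne ?_
        rw [hb2v] at hc2
        linear_combination -hc2
      rw [hb1v, hb2v]
    · right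
      have hb2v : b₂ = wm * b₃ := by linarith
      have hb1v : b₁ = b₃ / wm := by
        rw [eq_div_iff hwmne]
        refine mul_right_cancel₀ hb3ne ?_
        rw [hb2v] at hc2
        linear_combination -hc2
      rw [hb1v, hb2v]

/-- Case (5)-(b) of Lemma 5 of the paper: for `j₃ > j₁ = j₂ > 0`, with
`s = (j₃ + √(j₃² + 8j₁²))/(2j₁)` one has `s > 2`, and with
`w± = (s ± √(s² − 4))/2` and `b₃ = (j₁/s)^{1/3}`, the diagonal system has
exactly two real solutions `(b₃/w±, w± b₃, b₃)`; moreover `w₊ w₋ = 1`. -/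
theorem diagonal_system_two_solutions_case_b (j₁ j₃ : ℝ)
    (h₃₁ : j₃ > j₁) (h₁ : j₁ > 0)
    (s wp wm b₃ : ℝ)
    (hs : s = (j₃ + Real.sqrt (j₃ ^ 2 + 8 * j₁ ^ 2)) / (2 * j₁))
    (hwp : wp = (s + Real.sqrt (s ^ 2 - 4)) / 2)
    (hwm : wm = (s - Real.sqrt (s ^ 2 - 4)) / 2)
    (hb3 : b₃ = (j₁ / s) ^ ((1 : ℝ) / 3)) :
    s > 2 ∧
    (∀ b₁ b₂ c₃ : ℝ,
      (b₁ * (b₂ ^ 2 + c₃ ^ 2) = j₁ ∧ b₂ * (b₁ ^ 2 + c₃ ^ 2) = j₁ ∧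
        c₃ * (b₁ ^ 2 + b₂ ^ 2) = j₃) ↔
      ((b₁, b₂, c₃) = (b₃ / wp, wp * b₃, b₃) ∨
       (b₁, b₂, c₃) = (b₃ / wm, wm * b₃, b₃))) ∧
    (b₃ / wp, wp * b₃, b₃) ≠ (b₃ / wm, wm * b₃, b₃) ∧
    wp * wm = 1 := by
  have h3pos : j₃ > 0 := lt_trans h₁ h₃₁
  set r := Real.sqrt (j₃ ^ 2 + 8 * j₁ ^ 2) with hrdef
  have hr2 : r ^ 2 = j₃ ^ 2 + 8 * j₁ ^ 2 := Real.sq_sqrt (by positivity)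
  have hrnn : 0 ≤ r := Real.sqrt_nonneg _
  have hrbig : r > 3 * j₁ := by nlinarith
  have hseq : 2 * j₁ * s = j₃ + r := by
    rw [hs]; field_simp
  have hs2 : s > 2 := by nlinarith
  have hspos : 0 < s := by linarith
  have hkey : j₁ * s ^ 2 = j₃ * s + 2 * j₁ := by nlinarith [hseq, hr2]
  set q := Real.sqrt (s ^ 2 - 4) with hqdef
  have hq2 : q ^ 2 = s ^ 2 - 4 := Real.sq_sqrt (by nlinarith)
  have hqpos : 0 < q := Real.sqrt_pos.2 (by nlinarith)
  have hwsum : wp + wm = s := by rw [hwp, hwm]; ring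
  have hwprod : wp * wm = 1 := by
    rw [hwp, hwm]; linear_combination (-1/4 : ℝ) * hq2
  have hwppos : 0 < wp := by rw [hwp]; positivity
  have hqlt : q < s := by nlinarith
  have hwmpos : 0 < wm := by rw [hwm]; linarith
  have hwpne : wp ≠ 0 := ne_of_gt hwppos
  have hwmne : wm ≠ 0 := ne_of_gt hwmpos
  have hwpwm : wp ≠ wm := by rw [hwp, hwm]; intro h; nlinarith
  have hb3pos : 0 < b₃ := by
    rw [hb3]; exact Real.rpow_pos_of_pos (by positivity) _
  have hb3ne : b₃ ≠ 0 := ne_of_gt hb3pos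
  have hb33 : b₃ ^ 3 = j₁ / s := by
    rw [hb3, ← Real.rpow_natCast ((j₁ / s) ^ ((1:ℝ)/3)) 3,
      ← Real.rpow_mul (by positivity)]
    norm_num
  have hj1 : j₁ = s * b₃ ^ 3 := by
    field_simp at hb33; linarith
  have hj3 : j₃ = b₃ ^ 3 * (s ^ 2 - 2) := by
    have h0 : j₃ * s = (b₃ ^ 3 * (s ^ 2 - 2)) * s := by
      linear_combination -hkey + (s ^ 2 - 2) * hj1
    exact mul_right_cancel₀ (ne_of_gt hspos) h0
  have hwpq : wp ^ 2 = s * wp - 1 := by linear_combination wp * hwsum - hwprod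
  have hwmq : wm ^ 2 = s * wm - 1 := by linear_combination wm * hwsum - hwprod
  refine ⟨hs2, ?_, ?_, hwprod⟩
  · intro b₁ b₂ c₃
    constructor
    · rintro ⟨hb1, hb2, hc3⟩
      exact diag_aux_unique j₁ j₃ s wp wm b₃ h₁ h₃₁ h3pos hspos hb3pos hj1 hj3
        hwsum hwprod hwpne hwmne b₁ b₂ c₃ hb1 hb2 hc3
    · rintro (h | h)
      · simp only [Prod.mk.injEq] at h
        obtain ⟨h1, h2, h3⟩ := h
        rw [h1, h2, h3]
        exact diag_aux_forward j₁ j₃ s b₃ wp hj1 hj3 hwpne hwpq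
      · simp only [Prod.mk.injEq] at h
        obtain ⟨h1, h2, h3⟩ := h
        rw [h1, h2, h3]
        exact diag_aux_forward j₁ j₃ s b₃ wm hj1 hj3 hwmne hwmq
  · intro h
    simp only [Prod.mk.injEq] at h
    exact hwpwm (mul_right_cancel₀ hb3ne h.2.1)
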